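/- Let ρ be a probabilistic choice function identified by the Fréchet–Hoeffding lower bound W, with identifying distribution π_W, and let s, s' be choice types in the support of π_W that differ in exactly two components, i.e. |{i : s_i ≠ s'_i}| = 2. Then there exist j, k ∈ {1,…,n} such that s'_j < s_j and s_k < s'_k (the two deviations point in opposite directions with respect to the reference order). -/
import Mathlib


open Finset

variable {n : ℕ} {S : Fin n → Type*} [∀ i, Fintype (S i)] [∀ i, LinearOrder (S i)]

/-- `ρ` is a probabilistic choice function: each `ρ i` is a probability distribution on `S i`. -/
def IsPCF (ρ : ∀ i, S i → ℝ) : Prop :=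
  (∀ i (x : S i), 0 ≤ ρ i x) ∧ ∀ i, ∑ x : S i, ρ i x = 1

/-- The cumulative choice function `P_i(x) = ∑_{y ≤ x} ρ_i(y)`. -/
noncomputable def cumul (ρ : ∀ i, S i → ℝ) (i : Fin n) (x : S i) : ℝ :=
  ∑ y ∈ Finset.univ.filter (fun y => y ≤ x), ρ i y

/-- `π` is a probability distribution over choice types. -/
def IsDist (π : (∀ i, S i) → ℝ) : Prop :=
  (∀ s, 0 ≤ π s) ∧ ∑ s : ∀ i, S i, π s = 1

/-- `π` represents `ρ`: the marginals of `π` agree with `ρ`. -/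
def Represents (π : (∀ i, S i) → ℝ) (ρ : ∀ i, S i → ℝ) : Prop :=
  ∀ i (x : S i), ∑ s ∈ Finset.univ.filter (fun s : ∀ i, S i => s i = x), π s = ρ i x

/-- `π(⊴ s)`: total mass on choice types componentwise below `s`. -/
noncomputable def cdfLe (π : (∀ i, S i) → ℝ) (s : ∀ i, S i) : ℝ :=
  ∑ t ∈ Finset.univ.filter (fun t : ∀ i, S i => ∀ i, t i ≤ s i), π t

lemma cumul_mono (ρ : ∀ i, S i → ℝ) (hρ : IsPCF ρ) (i : Fin n) {x y : S i} (hxy : x ≤ y) :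
    cumul ρ i x ≤ cumul ρ i y := by
  apply Finset.sum_le_sum_of_subset_of_nonneg
  · intro t ht
    simp only [mem_filter, mem_univ, true_and] at ht ⊢
    exact le_trans ht hxy
  · intro t _ _; exact hρ.1 i t

lemma pi_le_cdfLe (π : (∀ i, S i) → ℝ) (hπ : ∀ s, 0 ≤ π s) (a : ∀ i, S i) :
    π a ≤ cdfLe π a := by
  apply Finset.single_le_sum (f := π) (fun t _ => hπ t)
  simp

lemma sum_cumul_update (ρ : ∀ i, S i → ℝ) (t : ∀ i, S i) (j : Fin n) (x : S j) :
    ∑ i, cumul ρ i (Function.update t j x i)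
      = ∑ i, cumul ρ i (t i) + (cumul ρ j x - cumul ρ j (t j)) := by
  rw [← Finset.sum_erase_add Finset.univ (fun i => cumul ρ i (Function.update t j x i)) (Finset.mem_univ j),
      ← Finset.sum_erase_add Finset.univ (fun i => cumul ρ i (t i)) (Finset.mem_univ j)]
  have h1 : ∑ i ∈ Finset.univ.erase j, cumul ρ i (Function.update t j x i)
      = ∑ i ∈ Finset.univ.erase j, cumul ρ i (t i) := by
    apply Finset.sum_congr rfl
    intro i hi
    rw [Function.update_of_ne (Finset.mem_erase.mp hi).1]
  rw [h1, Function.update_self]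
  ring

lemma aux_no_comparable (ρ : ∀ i, S i → ℝ) (hρ : IsPCF ρ)
    (πW : (∀ i, S i) → ℝ) (hdist : IsDist πW)
    (hcdf : ∀ s : ∀ i, S i, cdfLe πW s = max (∑ i, cumul ρ i (s i) + 1 - (n : ℝ)) 0)
    (a b : ∀ i, S i) (ha : 0 < πW a) (hb : 0 < πW b)
    (j k : Fin n) (hjk : j ≠ k) (hj : a j < b j) (hk : a k < b k)
    (heq : ∀ i, i ≠ j → i ≠ k → a i = b i) : False := by
  classical
  set g : (∀ i, S i) → ℝ := fun t => ∑ i, cumul ρ i (t i) + 1 - (n : ℝ) with hg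
  set u : ∀ i, S i := Function.update a j (b j) with hu
  set w : ∀ i, S i := Function.update a k (b k) with hw
  have hab : ∀ i, a i ≤ b i := by
    intro i
    by_cases hij : i = j
    · subst hij; exact hj.le
    by_cases hik : i = k
    · subst hik; exact hk.le
    · exact (heq i hij hik).le
  have hua : ∀ i, a i ≤ u i := by
    intro i; by_cases hij : i = j
    · subst hij; rw [hu, Function.update_self]; exact hj.le
    · rw [hu, Function.update_of_ne hij]
  have hwa : ∀ i, a i ≤ w i := by
    intro i; by_cases hik : i = k
    · subst hik; rw [hw, Function.update_self]; exact hk.le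
    · rw [hw, Function.update_of_ne hik]
  have hub : ∀ i, u i ≤ b i := by
    intro i; by_cases hij : i = j
    · subst hij; rw [hu, Function.update_self]
    · rw [hu, Function.update_of_ne hij]; exact hab i
  have hwb : ∀ i, w i ≤ b i := by
    intro i; by_cases hik : i = k
    · subst hik; rw [hw, Function.update_self]
    · rw [hw, Function.update_of_ne hik]; exact hab i
  have gmono : ∀ t t' : ∀ i, S i, (∀ i, t i ≤ t' i) → g t ≤ g t' := by
    intro t t' h
    simp only [hg]
    have : ∑ i, cumul ρ i (t i) ≤ ∑ i, cumul ρ i (t' i) :=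
      Finset.sum_le_sum fun i _ => cumul_mono ρ hρ i (h i)
    linarith
  -- positivity of g a
  have hcdfa : cdfLe πW a = max (g a) 0 := hcdf a
  have hga : 0 < g a := by
    have h1 : (0 : ℝ) < cdfLe πW a := lt_of_lt_of_le ha (pi_le_cdfLe πW hdist.1 a)
    rw [hcdfa] at h1
    rcases lt_max_iff.mp h1 with h | h
    · exact h
    · exact absurd h (lt_irrefl 0)
  have hgu : 0 ≤ g u := le_trans hga.le (gmono a u hua)
  have hgw : 0 ≤ g w := le_trans hga.le (gmono a w hwa)
  have hgb : 0 ≤ g b := le_trans hga.le (gmono a b hab)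
  have ca : cdfLe πW a = g a := by rw [hcdf a]; exact max_eq_left hga.le
  have cu : cdfLe πW u = g u := by rw [hcdf u]; exact max_eq_left hgu
  have cw : cdfLe πW w = g w := by rw [hcdf w]; exact max_eq_left hgw
  have cb : cdfLe πW b = g b := by rw [hcdf b]; exact max_eq_left hgb
  -- modularity: g u + g w = g b + g a
  have hbu : b = Function.update u k (b k) := by
    funext i
    by_cases hik : i = k
    · subst hik; rw [Function.update_self]
    · rw [Function.update_of_ne hik]
      by_cases hij : i = j
      · subst hij; rw [hu, Function.update_self]
      · rw [hu, Function.update_of_ne hij]; exact (heq i hij hik).symm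
  have hmod : g u + g w = g b + g a := by
    have e1 : ∑ i, cumul ρ i (u i) = ∑ i, cumul ρ i (a i) + (cumul ρ j (b j) - cumul ρ j (a j)) :=
      sum_cumul_update ρ a j (b j)
    have e2 : ∑ i, cumul ρ i (w i) = ∑ i, cumul ρ i (a i) + (cumul ρ k (b k) - cumul ρ k (a k)) :=
      sum_cumul_update ρ a k (b k)
    have e3 : ∑ i, cumul ρ i (b i) = ∑ i, cumul ρ i (u i) + (cumul ρ k (b k) - cumul ρ k (u k)) := by
      conv_lhs => rw [hbu]
      exact sum_cumul_update ρ u k (b k)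
    have e4 : u k = a k := by rw [hu, Function.update_of_ne (Ne.symm hjk)]
    rw [e4] at e3
    simp only [hg]
    linarith
  -- inclusion-exclusion inequality
  set A := Finset.univ.filter (fun t : ∀ i, S i => ∀ i, t i ≤ a i) with hA
  set U := Finset.univ.filter (fun t : ∀ i, S i => ∀ i, t i ≤ u i) with hU
  set W := Finset.univ.filter (fun t : ∀ i, S i => ∀ i, t i ≤ w i) with hW
  set B := Finset.univ.filter (fun t : ∀ i, S i => ∀ i, t i ≤ b i) with hB
  have hUW : U ∩ W = A := by
    ext t
    simp only [hU, hW, hA, Finset.mem_inter, Finset.mem_filter, Finset.mem_univ, true_and]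
    constructor
    · rintro ⟨h1, h2⟩ i
      by_cases hij : i = j
      · have := h2 i
        rwa [hw, Function.update_of_ne (by rw [hij]; exact hjk)] at this
      by_cases hik : i = k
      · have := h1 i
        rwa [hu, Function.update_of_ne (by rw [hik]; exact Ne.symm hjk)] at this
      · have := h1 i
        rwa [hu, Function.update_of_ne hij] at this
    · intro h
      exact ⟨fun i => le_trans (h i) (hua i), fun i => le_trans (h i) (hwa i)⟩
  have hsub : U ∪ W ⊆ B.erase b := by
    intro t ht
    rcases Finset.mem_union.mp ht with h | h
    · simp only [hU, Finset.mem_filter, Finset.mem_univ, true_and] at h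
      refine Finset.mem_erase.mpr ⟨?_, ?_⟩
      · intro hbt
        have := h k
        rw [hbt, hu, Function.update_of_ne (Ne.symm hjk)] at this
        exact absurd this (not_le.mpr hk)
      · simp only [hB, Finset.mem_filter, Finset.mem_univ, true_and]
        exact fun i => le_trans (h i) (hub i)
    · simp only [hW, Finset.mem_filter, Finset.mem_univ, true_and] at h
      refine Finset.mem_erase.mpr ⟨?_, ?_⟩
      · intro hbt
        have := h j
        rw [hbt, hw, Function.update_of_ne hjk] at this
        exact absurd this (not_le.mpr hj)
      · simp only [hB, Finset.mem_filter, Finset.mem_univ, true_and]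
        exact fun i => le_trans (h i) (hwb i)
  have hbB : b ∈ B := by
    simp only [hB, Finset.mem_filter, Finset.mem_univ, true_and]
    exact fun i => le_refl _
  have key : cdfLe πW u + cdfLe πW w + πW b ≤ cdfLe πW b + cdfLe πW a := by
    have h1 : ∑ t ∈ U, πW t + ∑ t ∈ W, πW t = ∑ t ∈ U ∪ W, πW t + ∑ t ∈ U ∩ W, πW t :=
      (Finset.sum_union_inter).symm
    have h2 : ∑ t ∈ U ∪ W, πW t ≤ ∑ t ∈ B.erase b, πW t :=
      Finset.sum_le_sum_of_subset_of_nonneg hsub (fun t _ _ => hdist.1 t)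
    have h3 : πW b + ∑ t ∈ B.erase b, πW t = ∑ t ∈ B, πW t :=
      Finset.add_sum_erase _ _ hbB
    have hcu : cdfLe πW u = ∑ t ∈ U, πW t := rfl
    have hcw : cdfLe πW w = ∑ t ∈ W, πW t := rfl
    have hca : cdfLe πW a = ∑ t ∈ A, πW t := rfl
    have hcb : cdfLe πW b = ∑ t ∈ B, πW t := rfl
    rw [hcu, hcw, hca, hcb, ← hUW]
    linarith
  rw [ca, cu, cw, cb] at key
  linarith

/-- if two types in the support of the FH-lower-bound representation
differ in exactly two components, the two deviations point in opposite directions. -/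
theorem FH_lower_support_opposite_deviations [∀ i, Nonempty (S i)]
    (ρ : ∀ i, S i → ℝ) (hρ : IsPCF ρ)
    (πW : (∀ i, S i) → ℝ) (hdist : IsDist πW) (hrep : Represents πW ρ)
    (hcdf : ∀ s : ∀ i, S i, cdfLe πW s = max (∑ i, cumul ρ i (s i) + 1 - (n : ℝ)) 0)
    (s s' : ∀ i, S i) (hs : 0 < πW s) (hs' : 0 < πW s')
    (hdiff : (Finset.univ.filter (fun i => s i ≠ s' i)).card = 2) :
    ∃ j k : Fin n, s' j < s j ∧ s k < s' k := by
  by_contra hcon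
  push_neg at hcon
  rw [Finset.card_eq_two] at hdiff
  obtain ⟨j, k, hjk, hset⟩ := hdiff
  have hmemj : s j ≠ s' j := by
    have : j ∈ Finset.univ.filter (fun i => s i ≠ s' i) := by rw [hset]; simp
    simpa using this
  have hmemk : s k ≠ s' k := by
    have : k ∈ Finset.univ.filter (fun i => s i ≠ s' i) := by rw [hset]; simp
    simpa using this
  have heq : ∀ i, i ≠ j → i ≠ k → s i = s' i := by
    intro i hij hik
    by_contra hne
    have : i ∈ Finset.univ.filter (fun i => s i ≠ s' i) := by simp [hne]
    rw [hset] at this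
    simp only [Finset.mem_insert, Finset.mem_singleton] at this
    tauto
  rcases lt_or_gt_of_ne hmemj with hj | hj
  · -- s j < s' j; then s k < s' k, else witnesses
    have hk : s k < s' k := by
      rcases lt_or_gt_of_ne hmemk with h | h
      · exact h
      · exact absurd (hcon k j h) (not_le.mpr hj)
    exact aux_no_comparable ρ hρ πW hdist hcdf s s' hs hs' j k hjk hj hk heq
  · -- s' j < s j; then s' k < s k
    have hk : s' k < s k := by
      rcases lt_or_gt_of_ne hmemk with h | h
      · exact absurd (hcon j k hj) (not_le.mpr h)
      · exact h
    exact aux_no_comparable ρ hρ πW hdist hcdf s' s hs' hs j k hjk hj hk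
      (fun i hij hik => (heq i hij hik).symm)
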